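/- arXiv:2510.10239 — 4 statements merged into one kernel-verified Lean document; each statement's English description precedes it below -/
import Mathlib

section
/- A multiplicative seminorm $|\cdot|$ on a commutative ring $A$ is non-Archimedean (i.e. satisfies the ultrametric inequality $|a+b|\le\max\{|a|,|b|\}$ for all $a,b\in A$) if and only if $|\cdot|$ is bounded on the image of $\mathbb{Z}$ in $A$, i.e. $\sup_{n\in\mathbb{Z}}|n\cdot 1_A|<\infty$. -/
open Filter Real Topology

private lemma aux_tendsto_root {C : ℝ} (hC : 0 < C) :
    Tendsto (fun k : ℕ ↦ C ^ (k : ℝ)⁻¹) atTop (𝓝 1) := by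
  convert_to Tendsto ((fun k ↦ C ^ k) ∘ (fun k : ℝ ↦ k⁻¹) ∘ (Nat.cast))
    atTop (𝓝 1)
  · rfl
  exact Tendsto.comp (Continuous.tendsto' (continuous_iff_continuousAt.2
    (fun a ↦ continuousAt_const_rpow hC.ne')) 0 1 (rpow_zero C))
    <| Tendsto.comp tendsto_inv_atTop_zero tendsto_natCast_atTop_atTop

private lemma aux_tendsto_nat_rpow_inv :
    Tendsto (fun k : ℕ ↦ (k : ℝ) ^ (k : ℝ)⁻¹) atTop (𝓝 1) := by
  convert_to Tendsto ((fun k : ℝ ↦ k ^ k⁻¹) ∘ Nat.cast) atTop (𝓝 1)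
  · rfl
  apply Tendsto.comp _ tendsto_natCast_atTop_atTop
  simp_rw [← one_div]
  exact tendsto_rpow_div

/-- A multiplicative seminorm on a commutative ring is non-Archimedean (satisfies
the ultrametric inequality) iff it is bounded on the image of `ℤ`. -/
theorem nonArchimedean_iff_bounded_on_int {A : Type*} [CommRing A]
    (f : A → ℝ)
    (hnn : ∀ a, 0 ≤ f a)
    (h0 : f 0 = 0) (h1 : f 1 = 1)
    (htri : ∀ a b, f (a + b) ≤ f a + f b)
    (hmul : ∀ a b, f (a * b) = f a * f b) :
    (∀ a b, f (a + b) ≤ max (f a) (f b)) ↔ ∃ B : ℝ, ∀ n : ℤ, f (n : A) ≤ B := by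
  have hpow : ∀ (x : A) (n : ℕ), f (x ^ n) = f x ^ n := by
    intro x n
    induction n with
    | zero => simpa using h1
    | succ k ih => rw [pow_succ, pow_succ, hmul, ih]
  constructor
  · intro hna
    refine ⟨1, fun n ↦ ?_⟩
    have hneg : f (-1 : A) = 1 := by
      have h2 : f (-1 : A) * f (-1 : A) = 1 := by
        rw [← hmul]; norm_num [h1]
      nlinarith [hnn (-1 : A)]
    have hnat : ∀ m : ℕ, f (m : A) ≤ 1 := by
      intro m
      induction m with
      | zero => simpa [h0]
      | succ k ih =>
        push_cast
        calc f ((k : A) + 1) ≤ max (f (k : A)) (f 1) := hna _ _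
          _ ≤ 1 := by rw [h1]; exact max_le ih le_rfl
    obtain ⟨m, rfl | rfl⟩ := n.eq_nat_or_neg
    · exact_mod_cast hnat m
    · push_cast
      have : f (-(m : A)) = f (-1 : A) * f (m : A) := by
        rw [← hmul]; ring_nf
      rw [this, hneg, one_mul]; exact hnat m
  · rintro ⟨B, hB⟩ a b
    have hB1 : (1 : ℝ) ≤ B := by
      have := hB 1; push_cast at this; rwa [h1] at this
    have hsum : ∀ (n : ℕ) (g : ℕ → A),
        f (∑ i ∈ Finset.range n, g i) ≤ ∑ i ∈ Finset.range n, f (g i) := by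
      intro n g
      induction n with
      | zero => simp [h0]
      | succ k ih =>
        rw [Finset.sum_range_succ, Finset.sum_range_succ]
        exact (htri _ _).trans (by linarith)
    set M : ℝ := max (f a) (f b) with hMdef
    have hM : 0 ≤ M := le_trans (hnn a) (le_max_left _ _)
    have key : ∀ n : ℕ, 1 ≤ n → f (a + b) ^ n ≤ 2 * B * n * M ^ n := by
      intro n hn
      rw [← hpow, add_pow]
      have hterm : ∀ k ∈ Finset.range (n + 1),
          f (a ^ k * b ^ (n - k) * (n.choose k : A)) ≤ B * M ^ n := by
        intro k hk
        have hk' : k ≤ n := Nat.lt_succ_iff.mp (Finset.mem_range.mp hk)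
        have fC : f ((n.choose k : ℕ) : A) ≤ B := by
          have := hB (n.choose k : ℤ); push_cast at this; exact this
        have h1' : f (a ^ k * b ^ (n - k) * (n.choose k : A))
            = f a ^ k * f b ^ (n - k) * f ((n.choose k : ℕ) : A) := by
          rw [hmul, hmul, hpow, hpow]
        rw [h1']
        have ha : f a ^ k ≤ M ^ k := pow_le_pow_left₀ (hnn a) (le_max_left _ _) k
        have hb : f b ^ (n - k) ≤ M ^ (n - k) :=
          pow_le_pow_left₀ (hnn b) (le_max_right _ _) (n - k)
        have hMn : M ^ k * M ^ (n - k) = M ^ n := by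
          rw [← pow_add, Nat.add_sub_cancel' hk']
        calc f a ^ k * f b ^ (n - k) * f ((n.choose k : ℕ) : A)
            ≤ M ^ k * M ^ (n - k) * B := by
              apply mul_le_mul (mul_le_mul ha hb (pow_nonneg (hnn b) _) (pow_nonneg hM _))
                fC (hnn _) (by positivity)
          _ = B * M ^ n := by rw [hMn]; ring
      calc f (∑ k ∈ Finset.range (n + 1), a ^ k * b ^ (n - k) * (n.choose k : A))
          ≤ ∑ k ∈ Finset.range (n + 1), f (a ^ k * b ^ (n - k) * (n.choose k : A)) :=
            hsum _ _
        _ ≤ ∑ _k ∈ Finset.range (n + 1), B * M ^ n := Finset.sum_le_sum hterm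
        _ = (n + 1) * (B * M ^ n) := by
            rw [Finset.sum_const, Finset.card_range]; push_cast; ring
        _ = ((n : ℝ) + 1) * B * M ^ n := by ring
        _ ≤ 2 * B * n * M ^ n := by
            have h1n : (1 : ℝ) ≤ (n : ℝ) := by exact_mod_cast hn
            have hMn : (0 : ℝ) ≤ M ^ n := pow_nonneg hM n
            have h2 : ((n : ℝ) + 1) * B ≤ 2 * B * (n : ℝ) := by nlinarith
            exact mul_le_mul_of_nonneg_right h2 hMn
    have h2B : (0 : ℝ) < 2 * B := by linarith
    have hstep : ∀ n : ℕ, 1 ≤ n →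
        f (a + b) ≤ (2 * B) ^ (n : ℝ)⁻¹ * (n : ℝ) ^ (n : ℝ)⁻¹ * M := by
      intro n hn
      have hnR : (0 : ℝ) < (n : ℝ) := by exact_mod_cast hn
      have hinv : (0 : ℝ) ≤ (n : ℝ)⁻¹ := by positivity
      have hx := key n hn
      have hr := Real.rpow_le_rpow (pow_nonneg (hnn _) n) hx hinv
      have hl : (f (a + b) ^ n : ℝ) ^ ((n : ℝ)⁻¹) = f (a + b) := by
        rw [← Real.rpow_natCast (f (a + b)) n, ← Real.rpow_mul (hnn _),
          mul_inv_cancel₀ hnR.ne', Real.rpow_one]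
      have hrhs : (2 * B * n * M ^ n) ^ ((n : ℝ)⁻¹)
          = (2 * B) ^ (n : ℝ)⁻¹ * (n : ℝ) ^ (n : ℝ)⁻¹ * M := by
        rw [Real.mul_rpow (by positivity) (pow_nonneg hM n),
          Real.mul_rpow (le_of_lt h2B) (le_of_lt hnR),
          ← Real.rpow_natCast M n, ← Real.rpow_mul hM,
          mul_inv_cancel₀ hnR.ne', Real.rpow_one]
      rw [hl, hrhs] at hr
      exact hr
    have hT : Tendsto (fun n : ℕ ↦ (2 * B) ^ (n : ℝ)⁻¹ * (n : ℝ) ^ (n : ℝ)⁻¹ * M)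
        atTop (𝓝 (1 * 1 * M)) :=
      ((aux_tendsto_root h2B).mul aux_tendsto_nat_rpow_inv).mul_const M
    have := ge_of_tendsto hT (eventually_atTop.mpr ⟨1, hstep⟩)
    simpa using this
end

section
/- Define the hybrid norm on $\mathbb{C}$ by $\|a\|^{\mathrm{hyb}}:=\max\{|a|_\infty,|a|_0\}$, where $|\cdot|_\infty$ is the usual absolute value and $|a|_0=1$ for $a\ne 0$, $|0|_0=0$. Then every multiplicative seminorm $|\cdot|$ on $\mathbb{C}$ with $|a|\le\|a\|^{\mathrm{hyb}}$ for all $a$ is of the form $|\cdot|=|\cdot|_\infty^{\varepsilon}$ for a unique $\varepsilon\in[0,1]$ (with $\varepsilon=0$ interpreted as the trivial absolute value $|\cdot|_0$). -/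
/-- Every multiplicative seminorm on `ℂ` bounded by the hybrid norm
`max (|·|_∞, |·|_0)` is of the form `|·|_∞ ^ ε` for a unique `ε ∈ [0,1]`
(the case `ε = 0` giving the trivial absolute value on nonzero elements). -/
theorem hybrid_spectrum_of_C (f : ℂ → ℝ)
    (hnn : ∀ a, 0 ≤ f a)
    (h0 : f 0 = 0) (h1 : f 1 = 1)
    (htri : ∀ a b, f (a + b) ≤ f a + f b)
    (hmul : ∀ a b, f (a * b) = f a * f b)
    (hbd : ∀ a : ℂ, f a ≤ max ‖a‖ (if a = 0 then (0 : ℝ) else 1)) :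
    ∃! ε : ℝ, ε ∈ Set.Icc (0 : ℝ) 1 ∧ ∀ a : ℂ, a ≠ 0 → f a = ‖a‖ ^ ε := by
  -- f is positive on nonzero elements
  have fpos : ∀ a : ℂ, a ≠ 0 → 0 < f a := by
    intro a ha
    have h : f a * f a⁻¹ = 1 := by
      rw [← hmul, mul_inv_cancel₀ ha, h1]
    rcases (hnn a).lt_or_eq with h' | h'
    · exact h'
    · exfalso; rw [← h', zero_mul] at h; norm_num at h
  -- f a ≤ max (abs a) 1 for nonzero a
  have hbd' : ∀ a : ℂ, a ≠ 0 → f a ≤ max ‖a‖ 1 := by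
    intro a ha
    have := hbd a
    rwa [if_neg ha] at this
  -- f = 1 on the unit circle
  have hcirc : ∀ a : ℂ, ‖a‖ = 1 → f a = 1 := by
    intro a ha
    have ha0 : a ≠ 0 := by
      intro h; rw [h, norm_zero] at ha; exact one_ne_zero ha.symm
    have h1a : f a ≤ 1 := by simpa [ha] using hbd' a ha0
    have h2a : f a⁻¹ ≤ 1 := by
      have : ‖a⁻¹‖ = 1 := by rw [norm_inv, ha, inv_one]
      simpa [this] using hbd' a⁻¹ (inv_ne_zero ha0)
    have hprod : f a * f a⁻¹ = 1 := by
      rw [← hmul, mul_inv_cancel₀ ha0, h1]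
    by_contra hne
    have hlt : f a < 1 := lt_of_le_of_ne h1a hne
    have : f a * f a⁻¹ < 1 := by
      calc f a * f a⁻¹ ≤ f a * 1 := by
            exact mul_le_mul_of_nonneg_left h2a (hnn a)
        _ = f a := mul_one _
        _ < 1 := hlt
    rw [hprod] at this; exact lt_irrefl 1 this
  -- f a = f (abs a) for nonzero a
  have hred : ∀ a : ℂ, a ≠ 0 → f a = f ((‖a‖ : ℝ) : ℂ) := by
    intro a ha
    have hr : (‖a‖ : ℝ) ≠ 0 := norm_ne_zero_iff.mpr ha
    have hu : ‖a / (‖a‖ : ℂ)‖ = 1 := by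
      rw [norm_div, Complex.norm_real, Real.norm_eq_abs, abs_of_nonneg (norm_nonneg a),
        div_self hr]
    have hrc : ((‖a‖ : ℝ) : ℂ) ≠ 0 := by exact_mod_cast hr
    have : a = ((‖a‖ : ℝ) : ℂ) * (a / (‖a‖ : ℂ)) := by
      rw [mul_comm, div_mul_cancel₀ _ hrc]
    calc f a = f (((‖a‖ : ℝ) : ℂ) * (a / (‖a‖ : ℂ))) := by rw [← this]
      _ = f ((‖a‖ : ℝ) : ℂ) * f (a / (‖a‖ : ℂ)) := hmul _ _
      _ = f ((‖a‖ : ℝ) : ℂ) := by rw [hcirc _ hu, mul_one]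
  -- the additive function φ
  set φ : ℝ → ℝ := fun x => Real.log (f ((Real.exp x : ℝ) : ℂ)) with hφ
  have hexppos : ∀ x : ℝ, 0 < f ((Real.exp x : ℝ) : ℂ) := by
    intro x
    apply fpos
    exact_mod_cast Real.exp_ne_zero x
  have hadd : ∀ x y : ℝ, φ (x + y) = φ x + φ y := by
    intro x y
    have : ((Real.exp (x + y) : ℝ) : ℂ) = ((Real.exp x : ℝ) : ℂ) * ((Real.exp y : ℝ) : ℂ) := by
      rw [Real.exp_add]; push_cast; ring
    simp only [hφ, this, hmul]
    exact Real.log_mul (hexppos x).ne' (hexppos y).ne'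
  have hφ0 : φ 0 = 0 := by
    simp [hφ, Real.exp_zero, h1]
  have hub : ∀ x : ℝ, φ x ≤ max x 0 := by
    intro x
    rw [hφ, Real.log_le_iff_le_exp (hexppos x)]
    have : f ((Real.exp x : ℝ) : ℂ) ≤ max (Real.exp x) 1 := by
      have h := hbd' ((Real.exp x : ℝ) : ℂ) (by exact_mod_cast Real.exp_ne_zero x)
      rwa [Complex.norm_real, Real.norm_eq_abs, abs_of_pos (Real.exp_pos x)] at h
    calc f ((Real.exp x : ℝ) : ℂ) ≤ max (Real.exp x) 1 := this
      _ = Real.exp (max x 0) := by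
          rw [← Real.exp_zero]
          exact (Real.exp_monotone.map_max).symm
  have hneg : ∀ x : ℝ, φ (-x) = -φ x := by
    intro x
    have := hadd x (-x)
    rw [add_neg_cancel, hφ0] at this
    linarith
  have hlip : ∀ x : ℝ, |φ x| ≤ |x| := by
    intro x
    rw [abs_le]
    constructor
    · have := hub (-x)
      rw [hneg] at this
      have h2 : max (-x) 0 ≤ |x| := by
        rcases le_total x 0 with h | h
        · rw [max_eq_left (by linarith), abs_of_nonpos h]
        · rw [max_eq_right (by linarith)]; exact abs_nonneg x
      linarith
    · exact (hub x).trans (by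
        rcases le_total x 0 with h | h
        · rw [max_eq_right h]; exact abs_nonneg x
        · rw [max_eq_left h, abs_of_nonneg h])
  -- φ is linear
  have hlin : ∀ x : ℝ, φ x = φ 1 * x := by
    have hom : ℝ →+ ℝ := AddMonoidHom.mk' φ fun x y => hadd x y
    have hcont : Continuous φ := by
      have : LipschitzWith 1 φ := by
        intro x y
        rw [edist_dist, edist_dist, Real.dist_eq, Real.dist_eq]
        have h1' : φ x - φ y = φ (x - y) := by
          have := hadd (x - y) y; rw [sub_add_cancel] at this; linarith
        rw [h1']
        calc ENNReal.ofReal |φ (x - y)| ≤ ENNReal.ofReal |x - y| :=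
              ENNReal.ofReal_le_ofReal (hlip _)
          _ = 1 * ENNReal.ofReal |x - y| := (one_mul _).symm
      exact this.continuous
    intro x
    have := (AddMonoidHom.mk' φ fun x y => hadd x y).toRealLinearMap hcont |>.map_smul x 1
    simpa [AddMonoidHom.coe_toRealLinearMap, smul_eq_mul, mul_comm] using (id this : φ (x • 1) = x • φ 1)
  set ε : ℝ := φ 1 with hε
  have hε1 : ε ≤ 1 := by
    have := hub 1; simpa using this
  have hε0 : 0 ≤ ε := by
    have := hub (-1)
    rw [hneg] at this
    simp at this
    linarith
  -- main formula
  have hform : ∀ a : ℂ, a ≠ 0 → f a = ‖a‖ ^ ε := by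
    intro a ha
    have hr : (0 : ℝ) < ‖a‖ := norm_pos_iff.mpr ha
    have key : f ((‖a‖ : ℝ) : ℂ) = ‖a‖ ^ ε := by
      have hexplog : Real.exp (Real.log (‖a‖)) = ‖a‖ := Real.exp_log hr
      have := hlin (Real.log (‖a‖))
      rw [hφ] at this
      simp only at this
      rw [hexplog] at this
      have hpos : 0 < f ((‖a‖ : ℝ) : ℂ) := fpos _ (by exact_mod_cast hr.ne')
      have : f ((‖a‖ : ℝ) : ℂ) = Real.exp (ε * Real.log (‖a‖)) := by
        rw [← this, Real.exp_log hpos]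
      rw [this, Real.rpow_def_of_pos hr, mul_comm]
    rw [hred a ha, key]
  refine ⟨ε, ⟨⟨hε0, hε1⟩, hform⟩, ?_⟩
  intro ε' ⟨_, hform'⟩
  have h2 : (2 : ℝ) ^ ε' = (2 : ℝ) ^ ε := by
    have ha := hform (2 : ℂ) (by norm_num)
    have hb := hform' (2 : ℂ) (by norm_num)
    have habs : ‖(2 : ℂ)‖ = 2 := by norm_num
    rw [habs] at ha hb
    rw [← ha, ← hb]
  have hl : ε' * Real.log 2 = ε * Real.log 2 := by
    have := congrArg Real.log h2
    rwa [Real.log_rpow (by norm_num), Real.log_rpow (by norm_num)] at this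
  have : Real.log 2 ≠ 0 := by
    have := Real.log_pos (by norm_num : (1:ℝ) < 2)
    linarith
  exact mul_right_cancel₀ this hl
end

section
/- Let $K_r$ be the ring of complex Laurent series $a=\sum_{k\in\mathbb{Z}}a_k t^k$ with $\sum_k\|a_k\|^{\mathrm{hyb}} r^k<\infty$, where $0<r<1$ and $\|\cdot\|^{\mathrm{hyb}}=\max\{|\cdot|_\infty,|\cdot|_0\}$ on $\mathbb{C}$, and define $\|a\|_r^{\mathrm{hyb}}=\sum_k\|a_k\|^{\mathrm{hyb}} r^k$. Then for every $a\in K_r$ and every $t_0$ with $0<|t_0|\le r$, setting $\varepsilon=\log r/\log|t_0|\in(0,1]$, one has $|a(t_0)|^{\varepsilon}\le\|a\|_r^{\mathrm{hyb}}$. -/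
/-- The hybrid norm on `ℂ`. -/
noncomputable def hybNorm (a : ℂ) : ℝ :=
  max ‖a‖ (if a = 0 then 0 else 1)

lemma real_rpow_add_le_add_rpow {ε : ℝ} (a b : ℝ) (ha : 0 ≤ a) (hb : 0 ≤ b)
    (hp : 0 ≤ ε) (hp1 : ε ≤ 1) : (a + b) ^ ε ≤ a ^ ε + b ^ ε := by
  lift a to NNReal using ha
  lift b to NNReal using hb
  have := NNReal.rpow_add_le_add_rpow a b hp hp1
  exact_mod_cast this

lemma finset_rpow_sum_le {ε : ℝ} (hε0 : 0 < ε) (hε1 : ε ≤ 1)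
    (f : ℤ → ℝ) (hf : ∀ k, 0 ≤ f k) (s : Finset ℤ) :
    (∑ k ∈ s, f k) ^ ε ≤ ∑ k ∈ s, f k ^ ε := by
  classical
  induction s using Finset.induction with
  | empty => simp [Real.zero_rpow hε0.ne']
  | @insert x t hx ih =>
      rw [Finset.sum_insert hx, Finset.sum_insert hx]
      calc (f x + ∑ k ∈ t, f k) ^ ε ≤ f x ^ ε + (∑ k ∈ t, f k) ^ ε :=
            real_rpow_add_le_add_rpow _ _ (hf x) (Finset.sum_nonneg fun k _ => hf k) hε0.le hε1
        _ ≤ f x ^ ε + ∑ k ∈ t, f k ^ ε := by linarith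

/-- For a Laurent series `a = ∑ₖ aₖ tᵏ` with `‖a‖_r^hyb = ∑ₖ ‖aₖ‖^hyb rᵏ < ∞`
(`0 < r < 1`), and any `t₀` with `0 < |t₀| ≤ r`, setting
`ε = log r / log |t₀|`, one has `|a(t₀)|^ε ≤ ‖a‖_r^hyb`. -/
theorem hybrid_norm_bound (r : ℝ) (hr0 : 0 < r) (hr1 : r < 1)
    (a : ℤ → ℂ)
    (ha : Summable fun k : ℤ => hybNorm (a k) * r ^ k)
    (t0 : ℂ) (ht0 : t0 ≠ 0) (ht0r : ‖t0‖ ≤ r)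
    (ε : ℝ) (hε : ε = Real.log r / Real.log ‖t0‖) :
    ‖∑' k : ℤ, a k * t0 ^ k‖ ^ ε ≤ ∑' k : ℤ, hybNorm (a k) * r ^ k := by
  set s := ‖t0‖ with hsdef
  have hs0 : 0 < s := norm_pos_iff.mpr ht0
  have hs1 : s < 1 := lt_of_le_of_lt ht0r hr1
  have hlogs : Real.log s < 0 := Real.log_neg hs0 hs1
  have hlogr : Real.log r < 0 := Real.log_neg hr0 hr1
  have hlogsr : Real.log s ≤ Real.log r := Real.log_le_log hs0 ht0r
  have hε0 : 0 < ε := by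
    rw [hε]; exact div_pos_of_neg_of_neg hlogr hlogs
  have hε1 : ε ≤ 1 := by
    rw [hε, div_le_one_of_neg hlogs]; exact hlogsr
  -- s ^ ε = r
  have hsε : s ^ ε = r := by
    rw [Real.rpow_def_of_pos hs0, hε, mul_comm, div_mul_cancel₀ _ hlogs.ne, Real.exp_log hr0]
  set b : ℤ → ℝ := fun k => ‖a k * t0 ^ k‖ with hbdef
  set g : ℤ → ℝ := fun k => hybNorm (a k) * r ^ k with hgdef
  have hb0 : ∀ k, 0 ≤ b k := fun k => (norm_nonneg _)
  have hg0 : ∀ k, 0 ≤ g k := by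
    intro k
    exact mul_nonneg (le_max_of_le_left (norm_nonneg _)) (zpow_pos hr0 k).le
  -- key pointwise inequality
  have key : ∀ k, b k ^ ε ≤ g k := by
    intro k
    have hbk : b k = ‖a k‖ * s ^ k := by
      simp [hbdef, hsdef, norm_mul, norm_zpow]
    have hszpow : (0:ℝ) ≤ s ^ k := (zpow_pos hs0 k).le
    rw [hbk, Real.mul_rpow (norm_nonneg _) hszpow]
    have hsk : (s ^ k) ^ ε = r ^ k := by
      rw [← Real.rpow_intCast_mul hs0.le, mul_comm, Real.rpow_mul hs0.le, hsε,
        Real.rpow_intCast]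
    rw [hsk]
    have habs : ‖a k‖ ^ ε ≤ hybNorm (a k) := by
      by_cases h : a k = 0
      · simp [h, hybNorm, Real.zero_rpow hε0.ne']
      · rcases le_total (‖a k‖) 1 with hle | hge
        · calc ‖a k‖ ^ ε ≤ 1 :=
                Real.rpow_le_one (norm_nonneg _) hle hε0.le
            _ ≤ hybNorm (a k) := by simp [hybNorm, h]
        · calc ‖a k‖ ^ ε ≤ ‖a k‖ ^ (1:ℝ) :=
                Real.rpow_le_rpow_of_exponent_le hge hε1
            _ = ‖a k‖ := Real.rpow_one _
            _ ≤ hybNorm (a k) := le_max_left _ _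
    exact mul_le_mul_of_nonneg_right habs (zpow_pos hr0 k).le
  -- summability of b
  have hbsum : Summable b := by
    apply Summable.of_norm_bounded_eventually ha
    have : ∀ᶠ k in Filter.cofinite, g k < 1 :=
      ha.tendsto_cofinite_zero.eventually (gt_mem_nhds one_pos)
    filter_upwards [this] with k hk
    rw [Real.norm_of_nonneg (hb0 k)]
    have hbk1 : b k ≤ 1 := by
      by_contra h
      push_neg at h
      have : (1:ℝ) ≤ b k ^ ε := Real.one_le_rpow h.le hε0.le
      linarith [key k]
    calc b k = b k ^ (1:ℝ) := (Real.rpow_one _).symm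
      _ ≤ b k ^ ε := Real.rpow_le_rpow_of_exponent_ge' (hb0 k) hbk1 hε0.le hε1
      _ ≤ g k := key k
  have hasum : Summable fun k : ℤ => a k * t0 ^ k := by
    apply Summable.of_norm
    convert hbsum using 1
  -- chain of inequalities
  have h1 : ‖∑' k : ℤ, a k * t0 ^ k‖ ≤ ∑' k, b k := by
    simpa [hbdef] using norm_tsum_le_tsum_norm (f := fun k : ℤ => a k * t0 ^ k) (by convert hbsum using 1)
  have h2 : (∑' k, b k) ^ ε ≤ ∑' k, g k := by
    have htend : Filter.Tendsto (fun sf : Finset ℤ => (∑ k ∈ sf, b k) ^ ε)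
        Filter.atTop (nhds ((∑' k, b k) ^ ε)) := by
      exact (Real.continuousAt_rpow_const _ _ (Or.inr hε0.le)).tendsto.comp hbsum.hasSum
    refine le_of_tendsto htend (Filter.Eventually.of_forall fun sf => ?_)
    calc (∑ k ∈ sf, b k) ^ ε ≤ ∑ k ∈ sf, b k ^ ε := finset_rpow_sum_le hε0 hε1 b hb0 sf
      _ ≤ ∑ k ∈ sf, g k := Finset.sum_le_sum fun k _ => key k
      _ ≤ ∑' k, g k := Summable.sum_le_tsum sf (fun k _ => hg0 k) ha
  calc ‖∑' k : ℤ, a k * t0 ^ k‖ ^ ε ≤ (∑' k, b k) ^ ε :=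
        Real.rpow_le_rpow (norm_nonneg _) h1 hε0.le
    _ ≤ ∑' k, g k := h2
end

section
/- Let $f\colon[0,\infty)\to[0,\infty)$ be nonincreasing and right-continuous with $\lim_{t\to\infty}f(t)=0$, and suppose there exists $C>0$ such that $s\,f(t+s)\le C f(t)^2$ for all $t\ge 0$ and $s\in[0,1]$. If $f(0)<1/(2C)$, then $f(t)=0$ for all $t\ge 4C f(0)$. -/
/-- The elementary decay lemma: if `f : [0,∞) → [0,∞)` is nonincreasing,
right-continuous, tends to `0` at infinity, and satisfies
`s f(t+s) ≤ C f(t)²` for `t ≥ 0`, `s ∈ [0,1]`, and if `f(0) < 1/(2C)`,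
then `f(t) = 0` for all `t ≥ 4 C f(0)`. -/
theorem decay_lemma (f : ℝ → ℝ)
    (hnn : ∀ t, 0 ≤ t → 0 ≤ f t)
    (hmono : ∀ s t, 0 ≤ s → s ≤ t → f t ≤ f s)
    (hrc : ∀ t, 0 ≤ t → ContinuousWithinAt f (Set.Ici t) t)
    (hlim : Filter.Tendsto f Filter.atTop (nhds 0))
    (C : ℝ) (hC : 0 < C)
    (hdecay : ∀ t, 0 ≤ t → ∀ s ∈ Set.Icc (0:ℝ) 1, s * f (t + s) ≤ C * f t ^ 2)
    (h0 : f 0 < 1 / (2 * C)) :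
    ∀ t, 4 * C * f 0 ≤ t → f t = 0 := by
  have hf0 : 0 ≤ f 0 := hnn 0 le_rfl
  have h0' : f 0 * (2 * C) < 1 := (lt_div_iff₀ (by positivity)).mp h0
  -- define the iteration
  set g : ℕ → ℝ := fun n => Nat.rec 0 (fun _ x => x + 2 * C * f x) n with hg
  have hgsucc : ∀ n, g (n + 1) = g n + 2 * C * f (g n) := fun n => rfl
  have key : ∀ n, 0 ≤ g n ∧ f (g n) ≤ f 0 * (1/2)^n ∧
      g n ≤ 4 * C * f 0 * (1 - (1/2)^n) := by
    intro n
    induction n with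
    | zero => simp [hg]
    | succ n ih =>
      obtain ⟨h1, h2, h3⟩ := ih
      have hfg : 0 ≤ f (g n) := hnn _ h1
      have hfg0 : f (g n) ≤ f 0 := hmono 0 _ le_rfl h1
      have hs0 : 0 ≤ 2 * C * f (g n) := by positivity
      have hs1 : 2 * C * f (g n) ≤ 1 := by nlinarith
      have hpn : (0:ℝ) < (1/2)^n := by positivity
      have hhalf : f (g (n + 1)) ≤ f (g n) / 2 := by
        rcases hfg.eq_or_lt with heq | hpos
        · have hmem : g n ≤ g (n + 1) := by rw [hgsucc]; linarith
          have := hmono _ _ h1 hmem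
          linarith [this, heq.le, heq.ge]
        · have hd := hdecay (g n) h1 (2 * C * f (g n)) ⟨hs0, hs1⟩
          rw [hgsucc]
          nlinarith [hd, mul_pos (by linarith : (0:ℝ) < 2 * C) hpos]
      refine ⟨by rw [hgsucc]; linarith, ?_, ?_⟩
      · calc f (g (n + 1)) ≤ f (g n) / 2 := hhalf
          _ ≤ (f 0 * (1/2)^n) / 2 := by linarith
          _ = f 0 * (1/2)^(n+1) := by ring
      · rw [hgsucc]
        have : 2 * C * f (g n) ≤ 2 * C * (f 0 * (1/2)^n) := by nlinarith
        calc g n + 2 * C * f (g n) ≤ 4 * C * f 0 * (1 - (1/2)^n) + 2 * C * (f 0 * (1/2)^n) := by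
              linarith
          _ = 4 * C * f 0 * (1 - (1/2)^(n+1)) := by ring
  intro t ht
  have ht0 : 0 ≤ t := le_trans (by positivity) ht
  have hub : ∀ n, f t ≤ f 0 * (1/2)^n := by
    intro n
    obtain ⟨h1, h2, h3⟩ := key n
    have hgt : g n ≤ t := by
      refine le_trans h3 (le_trans ?_ ht)
      have hp : (0:ℝ) < (1/2)^n := by positivity
      nlinarith [mul_nonneg (mul_nonneg hC.le hf0) hp.le]
    exact le_trans (hmono _ _ h1 hgt) h2
  have hlim2 : Filter.Tendsto (fun n : ℕ => f 0 * (1/2)^n) Filter.atTop (nhds 0) := by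
    have := tendsto_pow_atTop_nhds_zero_of_lt_one (by norm_num : (0:ℝ) ≤ 1/2)
      (by norm_num : (1/2:ℝ) < 1)
    simpa using this.const_mul (f 0)
  have hle : f t ≤ 0 := ge_of_tendsto' hlim2 hub
  linarith [hnn t ht0]
end
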